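/- Let A be a nonnegative selfadjoint operator on a complex Hilbert space X with trivial kernel, and let α ∈ (0, 1/2). Then for every x ∈ D(A^{1/2}) with A^{1/2}x ∈ R(A^α) and x ∈ R(A^α), one has ‖x‖_X ≤ 2^{1/2 + α(1-2α)} · (∫₀^∞ t^{2α-1}‖e^{-tA}A^{1/2}x‖² dt)^{α} · (∫₀^∞ t^{2α-1}‖e^{-tA}x‖² dt)^{(1-2α)/2}. -/

import Mathlib

/-!
By the spectral theorem, every nonnegative selfadjoint operator `A` on a complex
Hilbert space `X` (with trivial kernel) is unitarily equivalent to multiplication by a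
measurable function `a ≥ 0` (with `a > 0` a.e.) on some `L²(μ)`.  We formalize the
statement in this spectral model: `X = L²(μ)`, `(e^{-tA}x)(i) = exp(-t·a i)·x i`,
`(A^α y)(i) = (a i)^α·y i`, and `x ∈ R(A^α)` iff `x = A^α y` for some `y ∈ L²(μ)`.
-/

open MeasureTheory Filter
open scoped ENNReal NNReal Topology

/-- `‖e^{-tA} x‖²` in the spectral model. -/
noncomputable def heatNormSq {ι : Type*} [MeasurableSpace ι] (μ : Measure ι)
    (a : ι → ℝ) (x : ι → ℂ) (t : ℝ) : ℝ≥0∞ :=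
  ∫⁻ i, (‖x i‖₊ : ℝ≥0∞) ^ 2 * ENNReal.ofReal (Real.exp (-(2 * t * a i))) ∂μ

/-- `∫₀^∞ t^{2α-1} ‖e^{-tA} x‖² dt` in the spectral model; this is the square of the
norm `|||x|||_{R(A^α)}`. -/
noncomputable def rangeIntegral {ι : Type*} [MeasurableSpace ι] (μ : Measure ι)
    (a : ι → ℝ) (α : ℝ) (x : ι → ℂ) : ℝ≥0∞ :=
  ∫⁻ t in Set.Ioi (0 : ℝ), ENNReal.ofReal (t ^ (2 * α - 1)) * heatNormSq μ a x t

lemma one_le_Gamma_aux {s : ℝ} (h0 : 0 < s) (h1 : s ≤ 1) : 1 ≤ Real.Gamma s := by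
  have hc := Real.convexOn_log_Gamma
  set f : ℝ → ℝ := Real.log ∘ Real.Gamma with hf
  have key1 : f (2 - s) ≤ 0 := by
    have := hc.2 (Set.mem_Ioi.2 one_pos) (Set.mem_Ioi.2 two_pos) h0.le
      (by linarith : (0:ℝ) ≤ 1 - s) (by ring)
    have he : s • (1:ℝ) + (1 - s) • (2:ℝ) = 2 - s := by simp [smul_eq_mul]; ring
    rw [he] at this
    simpa [hf, Function.comp, Real.Gamma_one, Real.Gamma_two, smul_eq_mul] using this
  have key2 : 0 ≤ f s := by
    have := hc.2 (Set.mem_Ioi.2 h0) (Set.mem_Ioi.2 (by linarith : (0:ℝ) < 2 - s))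
      (by norm_num : (0:ℝ) ≤ 1/2) (by norm_num : (0:ℝ) ≤ 1/2) (by norm_num)
    have he : (1/2 : ℝ) • s + (1/2 : ℝ) • (2 - s) = 1 := by simp [smul_eq_mul]; ring
    rw [he] at this
    simp only [hf, Function.comp, Real.Gamma_one, Real.log_one, smul_eq_mul] at this key1 ⊢
    linarith
  by_contra h
  push_neg at h
  have := Real.log_neg (Real.Gamma_pos_of_pos h0) h
  simp only [hf, Function.comp] at key2
  linarith

lemma lintegral_J_aux {c r : ℝ} (hc : 0 < c) (hr : 0 < r) :
    ∫⁻ t in Set.Ioi (0:ℝ), ENNReal.ofReal (t ^ (c - 1)) * ENNReal.ofReal (Real.exp (-(r * t)))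
      = ENNReal.ofReal ((1/r) ^ c * Real.Gamma c) := by
  have hint : IntegrableOn (fun t : ℝ => t ^ (c - 1) * Real.exp (-(r * t))) (Set.Ioi 0) := by
    have := integrableOn_rpow_mul_exp_neg_mul_rpow (by linarith : (-1:ℝ) < c - 1)
      (by norm_num : (0:ℝ) < 1) hr
    simpa [Real.rpow_one, neg_mul] using this
  rw [← Real.integral_rpow_mul_exp_neg_mul_Ioi hc hr,
    MeasureTheory.ofReal_integral_eq_lintegral_ofReal hint ?_]
  · refine setLIntegral_congr_fun measurableSet_Ioi (fun t ht => ?_)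
    rw [ENNReal.ofReal_mul (Real.rpow_nonneg (le_of_lt ht) _)]
  · filter_upwards [ae_restrict_mem measurableSet_Ioi] with t ht
    have : (0:ℝ) < t := ht
    positivity

lemma rangeIntegral_eq_aux {ι : Type*} [MeasurableSpace ι] (μ : Measure ι)
    (a : ι → ℝ) (hameas : Measurable a) (h0 : ∀ᵐ i ∂μ, 0 < a i)
    (α : ℝ) (hα1 : 0 < α) (z : ι → ℂ)
    (hz : AEMeasurable z μ) (hfin : (∫⁻ i, (‖z i‖₊ : ℝ≥0∞) ^ 2 ∂μ) ≠ ∞) :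
    rangeIntegral μ a α z
      = ∫⁻ i, (‖z i‖₊ : ℝ≥0∞) ^ 2
          * ENNReal.ofReal ((1/(2 * a i)) ^ (2*α) * Real.Gamma (2*α)) ∂μ := by
  set w : ι → ℝ≥0∞ := fun i => (‖z i‖₊ : ℝ≥0∞) ^ 2 with hw
  have hwm : AEMeasurable w μ := (hz.enorm.pow_const 2)
  set ν : Measure ι := μ.withDensity w with hν
  have hνfin : IsFiniteMeasure ν := isFiniteMeasure_withDensity hfin
  have hg : ∀ g : ι → ℝ≥0∞, Measurable g →
      ∫⁻ i, g i ∂ν = ∫⁻ i, w i * g i ∂μ := fun g hgm => by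
    rw [hν, lintegral_withDensity_eq_lintegral_mul₀ hwm hgm.aemeasurable]; rfl
  have step1 : ∀ t : ℝ, heatNormSq μ a z t
      = ∫⁻ i, ENNReal.ofReal (Real.exp (-(2 * t * a i))) ∂ν := fun t =>
    (hg (fun i => ENNReal.ofReal (Real.exp (-(2 * t * a i)))) (by fun_prop)).symm
  calc rangeIntegral μ a α z
      = ∫⁻ t in Set.Ioi (0:ℝ), ∫⁻ i, ENNReal.ofReal (t ^ (2*α - 1))
          * ENNReal.ofReal (Real.exp (-(2 * t * a i))) ∂ν := by
        refine lintegral_congr fun t => ?_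
        rw [step1 t, lintegral_const_mul' _ _ ENNReal.ofReal_ne_top]
    _ = ∫⁻ i, (∫⁻ t in Set.Ioi (0:ℝ), ENNReal.ofReal (t ^ (2*α - 1))
          * ENNReal.ofReal (Real.exp (-(2 * t * a i)))) ∂ν := by
        refine lintegral_lintegral_swap ?_
        have : Measurable fun p : ℝ × ι => ENNReal.ofReal (p.1 ^ (2*α - 1))
            * ENNReal.ofReal (Real.exp (-(2 * p.1 * a p.2))) := by fun_prop
        exact this.aemeasurable
    _ = ∫⁻ i, ENNReal.ofReal ((1/(2 * a i)) ^ (2*α) * Real.Gamma (2*α)) ∂ν := by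
        have h0ν : ∀ᵐ i ∂ν, 0 < a i := (withDensity_absolutelyContinuous μ w).ae_le h0
        refine lintegral_congr_ae ?_
        filter_upwards [h0ν] with i hi
        have hr : 0 < 2 * a i := by linarith
        rw [← lintegral_J_aux (c := 2*α) (r := 2 * a i) (by linarith) hr]
        refine setLIntegral_congr_fun measurableSet_Ioi (fun t ht => ?_)
        ring_nf
    _ = ∫⁻ i, w i * ENNReal.ofReal ((1/(2 * a i)) ^ (2*α) * Real.Gamma (2*α)) ∂μ :=
        hg _ (by fun_prop)

/-- Interpolation inequality: for `α ∈ (0,1/2)` and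
`x ∈ D(A^{1/2})` with `x ∈ R(A^α)` and `A^{1/2}x ∈ R(A^α)`,
`‖x‖_X ≤ 2^{1/2+α(1-2α)} |||A^{1/2}x|||_{R(A^α)}^{2α} |||x|||_{R(A^α)}^{1-2α}`,
where `|||z|||_{R(A^α)}² = rangeIntegral μ a α z`. -/
theorem stmt5 {ι : Type*} [MeasurableSpace ι] (μ : Measure ι)
    (a : ι → ℝ) (hameas : Measurable a) (ha0 : ∀ i, 0 ≤ a i)
    (hker : ∀ᵐ i ∂μ, a i ≠ 0)
    (α : ℝ) (hα1 : 0 < α) (hα2 : α < 1 / 2)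
    (x : ι → ℂ) (hx : MemLp x 2 μ)
    (hx12 : MemLp (fun i => ((Real.sqrt (a i) : ℝ) : ℂ) * x i) 2 μ)
    (hxR : MemLp x 2 μ ∧ ∃ y : ι → ℂ, MemLp y 2 μ ∧
      x =ᵐ[μ] fun i => ((a i ^ α : ℝ) : ℂ) * y i)
    (hAxR : ∃ y : ι → ℂ, MemLp y 2 μ ∧
      (fun i => ((Real.sqrt (a i) : ℝ) : ℂ) * x i) =ᵐ[μ] fun i => ((a i ^ α : ℝ) : ℂ) * y i) :
    eLpNorm x 2 μ
      ≤ ENNReal.ofReal (2 ^ ((1 : ℝ) / 2 + α * (1 - 2 * α))) *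
        (rangeIntegral μ a α (fun i => ((Real.sqrt (a i) : ℝ) : ℂ) * x i)) ^ α *
        (rangeIntegral μ a α x) ^ ((1 - 2 * α) / 2) := by
  clear hxR hAxR
  have h0 : ∀ᵐ i ∂μ, 0 < a i := by
    filter_upwards [hker] with i hi; exact (ha0 i).lt_of_ne (Ne.symm hi)
  set z : ι → ℂ := fun i => ((Real.sqrt (a i) : ℝ) : ℂ) * x i with hzdef
  -- finiteness of L² integrals
  have hfin_of : ∀ {u : ι → ℂ}, MemLp u 2 μ → (∫⁻ i, (‖u i‖₊ : ℝ≥0∞) ^ 2 ∂μ) ≠ ∞ := by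
    intro u hu
    have h := hu.2
    rw [eLpNorm_eq_lintegral_rpow_enorm_toReal (by norm_num) (by norm_num)] at h
    simp only [ENNReal.toReal_ofNat, enorm_eq_nnnorm] at h
    have h2 : (∫⁻ i, (‖u i‖₊ : ℝ≥0∞) ^ (2:ℝ) ∂μ) < ∞ := by
      by_contra hc
      push_neg at hc
      rw [top_le_iff.1 hc] at h
      simp [ENNReal.top_rpow_of_pos] at h
    rw [← lt_top_iff_ne_top]
    refine lt_of_eq_of_lt ?_ h2
    refine lintegral_congr fun i => ?_
    rw [← ENNReal.rpow_natCast]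
    norm_num
  have hxm : AEMeasurable x μ := hx.1.aemeasurable
  have hzm : AEMeasurable z μ := hx12.1.aemeasurable
  -- nnnorm of z
  have hznorm : ∀ i, (‖z i‖₊ : ℝ≥0∞) ^ 2 = ENNReal.ofReal (a i) * (‖x i‖₊ : ℝ≥0∞) ^ 2 := by
    intro i
    rw [hzdef, nnnorm_mul, ENNReal.coe_mul, mul_pow, Complex.nnnorm_real,
      ← enorm_eq_nnnorm (Real.sqrt (a i)), Real.enorm_eq_ofReal (Real.sqrt_nonneg _), ← ENNReal.ofReal_pow (Real.sqrt_nonneg _),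
      Real.sq_sqrt (ha0 i)]
  -- the Gamma constant
  set C : ℝ≥0∞ := ENNReal.ofReal ((2:ℝ) ^ (-(2*α)) * Real.Gamma (2*α)) with hC
  have hCconst : ∀ s : ℝ, 0 < s →
      ENNReal.ofReal ((1/(2 * s)) ^ (2*α) * Real.Gamma (2*α))
        = C * ENNReal.ofReal (s ^ (-(2*α))) := by
    intro s hs
    rw [hC, ← ENNReal.ofReal_mul (by positivity)]
    congr 1
    have e : ((2*s)⁻¹ : ℝ) ^ (2*α) = 2 ^ (-(2*α)) * s ^ (-(2*α)) := by
      rw [Real.inv_rpow (by positivity), Real.mul_rpow (by norm_num) hs.le, mul_inv,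
        ← Real.rpow_neg (by norm_num), ← Real.rpow_neg hs.le]
    rw [one_div, e]
    ring
  -- the two integrals
  set I₁ : ℝ≥0∞ := ∫⁻ i, (‖x i‖₊ : ℝ≥0∞) ^ 2 * ENNReal.ofReal (a i ^ (1 - 2*α)) ∂μ with hI₁
  set I₂ : ℝ≥0∞ := ∫⁻ i, (‖x i‖₊ : ℝ≥0∞) ^ 2 * ENNReal.ofReal (a i ^ (-(2*α))) ∂μ with hI₂
  have hR₂ : rangeIntegral μ a α x = C * I₂ := by
    rw [rangeIntegral_eq_aux μ a hameas h0 α hα1 x hxm (hfin_of hx), hI₂,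
      ← lintegral_const_mul' _ _ ENNReal.ofReal_ne_top]
    refine lintegral_congr_ae ?_
    filter_upwards [h0] with i hi
    rw [hCconst _ hi]; ring
  have hR₁ : rangeIntegral μ a α z = C * I₁ := by
    rw [rangeIntegral_eq_aux μ a hameas h0 α hα1 z hzm (hfin_of hx12), hI₁,
      ← lintegral_const_mul' _ _ ENNReal.ofReal_ne_top]
    refine lintegral_congr_ae ?_
    filter_upwards [h0] with i hi
    rw [hznorm i, hCconst _ hi]
    rw [show ENNReal.ofReal (a i) * (‖x i‖₊ : ℝ≥0∞)^2 * (C * ENNReal.ofReal (a i ^ (-(2*α))))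
      = C * ((‖x i‖₊ : ℝ≥0∞)^2 * (ENNReal.ofReal (a i) * ENNReal.ofReal (a i ^ (-(2*α))))) from
      by ring]
    rw [← ENNReal.ofReal_mul (ha0 i)]
    congr 3
    rw [show a i * a i ^ (-(2*α)) = a i ^ (1:ℝ) * a i ^ (-(2*α)) from by rw [Real.rpow_one],
      ← Real.rpow_add hi]
    ring_nf
  -- Hölder
  have holder : ∫⁻ i, (‖x i‖₊ : ℝ≥0∞) ^ 2 ∂μ ≤ I₁ ^ (2*α) * I₂ ^ (1 - 2*α) := by
    have hmle := ENNReal.lintegral_mul_norm_pow_le (μ := μ)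
      (f := fun i => (‖x i‖₊ : ℝ≥0∞) ^ 2 * ENNReal.ofReal (a i ^ (1 - 2*α)))
      (g := fun i => (‖x i‖₊ : ℝ≥0∞) ^ 2 * ENNReal.ofReal (a i ^ (-(2*α))))
      ((hxm.enorm.pow_const 2).mul (by fun_prop))
      ((hxm.enorm.pow_const 2).mul (by fun_prop))
      (p := 2*α) (q := 1 - 2*α) (by linarith) (by linarith) (by ring)
    refine le_trans (le_of_eq ?_) hmle
    refine lintegral_congr_ae ?_
    filter_upwards [h0] with i hi
    set X : ℝ≥0∞ := (‖x i‖₊ : ℝ≥0∞) ^ 2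
    set s : ℝ := a i
    rw [ENNReal.mul_rpow_of_nonneg _ _ (by linarith), ENNReal.mul_rpow_of_nonneg _ _ (by linarith),
      ENNReal.ofReal_rpow_of_pos (Real.rpow_pos_of_pos hi _),
      ENNReal.ofReal_rpow_of_pos (Real.rpow_pos_of_pos hi _),
      ← Real.rpow_mul hi.le, ← Real.rpow_mul hi.le]
    rw [show X ^ (2*α) * ENNReal.ofReal (s ^ ((1 - 2*α)*(2*α))) *
        (X ^ (1-2*α) * ENNReal.ofReal (s ^ (-(2*α)*(1-2*α))))
        = (X ^ (2*α) * X ^ (1-2*α)) * (ENNReal.ofReal (s ^ ((1 - 2*α)*(2*α)))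
          * ENNReal.ofReal (s ^ (-(2*α)*(1-2*α)))) from by ring]
    rw [← ENNReal.rpow_add_of_nonneg _ _ (by linarith) (by linarith),
      ← ENNReal.ofReal_mul (Real.rpow_nonneg hi.le _), ← Real.rpow_add hi,
      show (2*α) + (1-2*α) = 1 from by ring,
      show (1 - 2*α)*(2*α) + -(2*α)*(1-2*α) = 0 from by ring,
      ENNReal.rpow_one, Real.rpow_zero, ENNReal.ofReal_one, mul_one]
  -- eLpNorm as integral
  have hsn : eLpNorm x 2 μ = (∫⁻ i, (‖x i‖₊ : ℝ≥0∞) ^ 2 ∂μ) ^ ((1:ℝ)/2) := by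
    rw [eLpNorm_eq_lintegral_rpow_enorm_toReal (by norm_num) (by norm_num)]
    simp only [ENNReal.toReal_ofNat, enorm_eq_nnnorm]
    congr 1
    refine lintegral_congr fun i => ?_
    rw [← ENNReal.rpow_natCast]
    norm_num
  -- the constant
  set K : ℝ≥0∞ := ENNReal.ofReal (2 ^ ((1 : ℝ) / 2 + α * (1 - 2 * α))) with hK
  have hconst : 1 ≤ K * C ^ ((1:ℝ)/2) := by
    have hCpos : (0:ℝ) < (2:ℝ) ^ (-(2*α)) * Real.Gamma (2*α) := by
      have := Real.Gamma_pos_of_pos (by linarith : (0:ℝ) < 2*α)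
      positivity
    rw [hK, hC, ENNReal.ofReal_rpow_of_pos hCpos, ← ENNReal.ofReal_mul (by positivity)]
    rw [Real.mul_rpow (by positivity) (Real.Gamma_pos_of_pos (by linarith)).le,
      ← Real.rpow_mul (by norm_num : (0:ℝ) ≤ 2)]
    refine ENNReal.one_le_ofReal.2 ?_
    have h1 : (1:ℝ) ≤ 2 ^ ((1 : ℝ) / 2 + α * (1 - 2 * α)) * 2 ^ (-(2*α) * (1/2)) := by
      rw [← Real.rpow_add (by norm_num : (0:ℝ) < 2)]
      refine Real.one_le_rpow (by norm_num) (by nlinarith)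
    have h2 : (1:ℝ) ≤ Real.Gamma (2*α) ^ ((1:ℝ)/2) :=
      Real.one_le_rpow (one_le_Gamma_aux (by linarith) (by linarith)) (by norm_num)
    nlinarith
  -- final chain
  calc eLpNorm x 2 μ = (∫⁻ i, (‖x i‖₊ : ℝ≥0∞) ^ 2 ∂μ) ^ ((1:ℝ)/2) := hsn
    _ ≤ (I₁ ^ (2*α) * I₂ ^ (1 - 2*α)) ^ ((1:ℝ)/2) := by
        exact ENNReal.rpow_le_rpow holder (by norm_num)
    _ = I₁ ^ α * I₂ ^ ((1 - 2*α)/2) := by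
        rw [ENNReal.mul_rpow_of_nonneg _ _ (by norm_num), ← ENNReal.rpow_mul, ← ENNReal.rpow_mul,
          show (2*α) * ((1:ℝ)/2) = α from by ring,
          show (1 - 2*α) * ((1:ℝ)/2) = (1-2*α)/2 from by ring]
    _ ≤ (K * C ^ ((1:ℝ)/2)) * (I₁ ^ α * I₂ ^ ((1 - 2*α)/2)) := by
        nth_rewrite 1 [← one_mul (I₁ ^ α * I₂ ^ ((1 - 2*α)/2))]
        exact mul_le_mul_left hconst _
    _ = K * (C * I₁) ^ α * ((C * I₂) ^ ((1 - 2*α)/2)) := by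
        have hC0 : C ≠ 0 := by
          rw [hC]
          have := Real.Gamma_pos_of_pos (by linarith : (0:ℝ) < 2*α)
          exact (ENNReal.ofReal_pos.2 (by positivity)).ne'
        rw [ENNReal.mul_rpow_of_nonneg C I₁ (by linarith),
          ENNReal.mul_rpow_of_nonneg C I₂ (by linarith)]
        rw [show ((1:ℝ)/2) = α + (1-2*α)/2 from by ring,
          ENNReal.rpow_add _ _ hC0 ENNReal.ofReal_ne_top]
        ring
    _ = K * (rangeIntegral μ a α z) ^ α * (rangeIntegral μ a α x) ^ ((1 - 2*α)/2) := by
        rw [hR₁, hR₂]
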